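/- arXiv:0710.1234 — 6 statements merged into one kernel-verified Lean document; each statement's English description precedes it below -/
import Mathlib

section
/- There do not exist strings x and y (over any alphabet) such that the Hamming distance between xy and yx equals 1. -/
/-- Hamming distance between two lists (of equal length): number of
positions where they differ. -/
def hdist {α : Type*} [DecidableEq α] (u v : List α) : ℕ :=
  ((u.zip v).filter (fun p => decide (p.1 ≠ p.2))).length

lemma hdist_eq_countP {α : Type*} [DecidableEq α] (a : α) :
    ∀ (u v : List α), u.length = v.length →
      hdist u v = (List.range u.length).countP
        (fun i => decide (u.getD i a ≠ v.getD i a))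
  | [], _, _ => by simp [hdist]
  | b :: u, [], h => by simp at h
  | b :: u, c :: v, h => by
      simp only [List.length_cons, Nat.succ.injEq] at h
      have ih := hdist_eq_countP a u v h
      simp only [hdist, List.zip_cons_cons, ← List.countP_eq_length_filter] at ih ⊢
      rw [List.countP_cons, ih, List.length_cons, List.range_succ_eq_map,
        List.countP_cons, List.countP_map]
      simp [Function.comp_def, List.getD_cons_succ]

lemma rot_getD {α : Type*} (x y : List α) (a : α) (i : ℕ)
    (hi : i < x.length + y.length) :
    (y ++ x).getD i a = (x ++ y).getD ((i + x.length) % (x.length + y.length)) a := by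
  by_cases hy : i < y.length
  · rw [List.getD_append _ _ _ _ hy,
      Nat.mod_eq_of_lt (by omega),
      List.getD_append_right _ _ _ _ (by omega)]
    congr 1
    omega
  · have hj : i - y.length < x.length := by omega
    rw [List.getD_append_right _ _ _ _ (by omega)]
    have : (i + x.length) % (x.length + y.length) = i - y.length := by
      have : i + x.length = (i - y.length) + (x.length + y.length) := by omega
      rw [this, Nat.add_mod_right, Nat.mod_eq_of_lt (by omega)]
    rw [this, List.getD_append _ _ _ _ hj]

theorem no_hamming_one {α : Type*} [DecidableEq α] :
    ¬ ∃ x y : List α, hdist (x ++ y) (y ++ x) = 1 := by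
  rintro ⟨x, y, h⟩
  set L := x.length + y.length with hLdef
  by_cases hL : L = 0
  · have hx : x = [] := by
      have := List.length_eq_zero_iff.mp (by omega : x.length = 0); exact this
    have hy : y = [] := by
      have := List.length_eq_zero_iff.mp (by omega : y.length = 0); exact this
    simp [hx, hy, hdist] at h
  have hLpos : 0 < L := Nat.pos_of_ne_zero hL
  have hxy : (x ++ y).length = L := by simp [hLdef]
  have hne : x ++ y ≠ [] := by
    intro hnil; rw [hnil] at hxy; simp at hxy; omega
  set a := (x ++ y).head hne with ha
  set g : ℕ → α := fun i => (x ++ y).getD i a with hg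
  set n := x.length with hn
  -- rewrite hdist as a count over positions
  have hlen : (x ++ y).length = (y ++ x).length := by simp [hLdef]; omega
  rw [hdist_eq_countP a _ _ hlen, hxy] at h
  -- express the predicate via g and rotation
  have hpred : ∀ i < L, ((x ++ y).getD i a ≠ (y ++ x).getD i a)
      ↔ (g i ≠ g ((i + n) % L)) := by
    intro i hi
    rw [rot_getD x y a i (by omega)]
  -- countP = 1 gives a unique mismatch position
  rw [List.countP_eq_length_filter] at h
  obtain ⟨i0, hfil⟩ := List.length_eq_one_iff.mp h
  have hmem : ∀ j, j ∈ (List.range L).filter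
      (fun i => decide ((x ++ y).getD i a ≠ (y ++ x).getD i a)) ↔ j = i0 := by
    intro j; rw [hfil]; simp
  have hi0 : i0 < L ∧ g i0 ≠ g ((i0 + n) % L) := by
    have := (hmem i0).mpr rfl
    simp only [List.mem_filter, List.mem_range, decide_eq_true_eq] at this
    exact ⟨this.1, (hpred i0 this.1).mp this.2⟩
  have huniq : ∀ j < L, j ≠ i0 → g j = g ((j + n) % L) := by
    intro j hj hji
    by_contra hne'
    have : j ∈ (List.range L).filter
        (fun i => decide ((x ++ y).getD i a ≠ (y ++ x).getD i a)) := by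
      simp only [List.mem_filter, List.mem_range, decide_eq_true_eq]
      exact ⟨hj, (hpred j hj).mpr hne'⟩
    exact hji ((hmem j).mp this)
  -- chain along the orbit of i0
  have chain : ∀ m : ℕ, g ((i0 + (m + 1) * n) % L) = g ((i0 + n) % L) := by
    intro m
    induction m with
    | zero => norm_num
    | succ m ih =>
      set i := (i0 + (m + 1) * n) % L with hi
      have hiL : i < L := Nat.mod_lt _ hLpos
      by_cases hii : i = i0
      · exfalso
        apply hi0.2
        rw [hii] at ih
        exact ih
      · have step := huniq i hiL hii
        have harith : (i + n) % L = (i0 + (m + 1 + 1) * n) % L := by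
          rw [hi, Nat.mod_add_mod]
          congr 1
          ring
        rw [← harith, ← step, ← ih]
  -- take m + 1 = L
  have hfin := chain (L - 1)
  have hLn : (i0 + (L - 1 + 1) * n) % L = i0 := by
    have : L - 1 + 1 = L := by omega
    rw [this, Nat.add_mul_mod_self_left, Nat.mod_eq_of_lt hi0.1]
  rw [hLn] at hfin
  exact hi0.2 hfin
end

section
/- Let Σ be an alphabet with at least 3 letters and let m, n, k be integers with 1 ≤ m < n and 0 ≤ k ≤ m + n, k ≠ 1. Then there exist strings x, y over Σ with |x| = m, |y| = n, and h(xy, yx) = k; moreover one can take x to consist of a single repeated letter. -/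
open List

lemma hdist_append {α : Type*} [DecidableEq α] (u1 u2 v1 v2 : List α)
    (h : u1.length = v1.length) :
    hdist (u1 ++ u2) (v1 ++ v2) = hdist u1 v1 + hdist u2 v2 := by
  unfold hdist
  rw [List.zip_append h, List.filter_append, List.length_append]

lemma hdist_rep {α : Type*} [DecidableEq α] (L : ℕ) (a b : α) :
    hdist (replicate L a) (replicate L b) = if a = b then 0 else L := by
  unfold hdist
  rw [List.zip_replicate]
  by_cases h : a = b <;> simp [h, List.filter_replicate]

lemma hdist_single {α : Type*} [DecidableEq α] (a b : α) :
    hdist [a] [b] = if a = b then 0 else 1 := by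
  unfold hdist
  by_cases h : a = b <;> simp [h]

lemma rep_cat {α : Type*} (a : α) (p q r : ℕ) (h : r = p + q) :
    replicate p a ++ replicate q a = replicate r a := by
  rw [h, List.replicate_add]

lemma rep_glue {α : Type*} (a : α) (p q r : ℕ) (h : r = p + q) (Z : List α) :
    replicate p a ++ (replicate q a ++ Z) = replicate r a ++ Z := by
  rw [← List.append_assoc, rep_cat a p q r h]

/-- Realizes any `k` with `2m ≤ k ≤ n+m`, with `y` starting with `b^m`. -/
lemma S_lemma {α : Type*} [DecidableEq α] (m : ℕ) (hm : 1 ≤ m) :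
    ∀ n (a b c : α), a ≠ b → a ≠ c → b ≠ c → ∀ k, m < n → 2*m ≤ k → k ≤ n + m →
    ∃ y : List α, y.length = n ∧
      hdist (replicate m a ++ y) (y ++ replicate m a) = k ∧
      ∃ w, y = replicate m b ++ w := by
  intro n
  induction n using Nat.strong_induction_on with
  | _ n IH =>
    intro a b c hab hac hbc k hmn h2m hkle
    by_cases hk3 : k ≤ 3*m
    · -- base: y = b^{n-e} c^e  with e = k - 2m gives hdist = 2m + e
      set e := k - 2*m with he
      have he1 : e ≤ m := by omega
      have he2 : e ≤ n - m := by omega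
      refine ⟨replicate (n-e) b ++ replicate e c, by simp; omega, ?_, ?_⟩
      · have hs1 : replicate m a ++ (replicate (n-e) b ++ replicate e c)
            = replicate m a ++ (replicate (n-m-e) b ++ (replicate e b ++
              (replicate (m-e) b ++ replicate e c))) := by
          rw [rep_glue b e (m-e) m (by omega), rep_glue b (n-m-e) m (n-e) (by omega)]
        have hs2 : (replicate (n-e) b ++ replicate e c) ++ replicate m a
            = replicate m b ++ (replicate (n-m-e) b ++ (replicate e c ++
              (replicate (m-e) a ++ replicate e a))) := by
          rw [rep_cat a (m-e) e m (by omega), rep_glue b m (n-m-e) (n-e) (by omega)]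
          simp [List.append_assoc]
        rw [hs1, hs2,
          hdist_append _ _ _ _ (by simp),
          hdist_append _ _ _ _ (by simp),
          hdist_append _ _ _ _ (by simp),
          hdist_append _ _ _ _ (by simp)]
        simp [hdist_rep, hab, hac, hbc, Ne.symm hab, Ne.symm hac, Ne.symm hbc]
        omega
      · exact ⟨replicate (n-m-e) b ++ replicate e c, by
          rw [← List.append_assoc, rep_cat b m (n-m-e) (n-e) (by omega)]⟩
    · -- recursive: n > 2m, prepend b^m to a solution starting with c^m
      obtain ⟨y', hlen', hH', w, hw⟩ :=
        IH (n-m) (by omega) a c b hac hab (Ne.symm hbc) (k-m)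
          (by omega) (by omega) (by omega)
      refine ⟨replicate m b ++ y', by simp [hlen']; omega, ?_, ⟨y', rfl⟩⟩
      subst hw
      simp only [List.append_assoc] at hH' ⊢
      rw [hdist_append _ _ _ _ (by simp), hdist_append _ _ _ _ (by simp)]
      rw [hdist_append _ _ _ _ (by simp)] at hH'
      simp [hdist_rep, hab, hac, hbc] at hH' ⊢
      omega

theorem hamming_realizable_lt {α : Type*} [DecidableEq α]
    (hcard : ∃ a b c : α, a ≠ b ∧ a ≠ c ∧ b ≠ c)
    (m n k : ℕ) (hm : 1 ≤ m) (hmn : m < n) (hk : k ≤ m + n) (hk1 : k ≠ 1) :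
    ∃ x y : List α, x.length = m ∧ y.length = n ∧
      hdist (x ++ y) (y ++ x) = k ∧ ∃ a : α, x = List.replicate m a := by
  obtain ⟨a, b, c, hab, hac, hbc⟩ := hcard
  by_cases h2m : 2*m ≤ k
  · obtain ⟨y, hlen, hH, -⟩ := S_lemma m hm n a b c hab hac hbc k hmn h2m (by omega)
    exact ⟨replicate m a, y, by simp, hlen, hH, a, rfl⟩
  · rcases Nat.even_or_odd k with ⟨j, hj⟩ | ⟨j, hj⟩
    · -- k = 2j, j < m : y = a^{n-j} b^j
      have hjm : j ≤ m := by omega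
      have hjn : j ≤ n := by omega
      refine ⟨replicate m a, replicate (n-j) a ++ replicate j b, by simp,
        by simp; omega, ?_, a, rfl⟩
      have hs1 : replicate m a ++ (replicate (n-j) a ++ replicate j b)
          = replicate (n-j) a ++ (replicate j a ++
            (replicate (m-j) a ++ replicate j b)) := by
        rw [rep_glue a m (n-j) (n+m-j) (by omega),
          rep_glue a j (m-j) m (by omega),
          rep_glue a (n-j) m (n+m-j) (by omega)]
      have hs2 : (replicate (n-j) a ++ replicate j b) ++ replicate m a
          = replicate (n-j) a ++ (replicate j b ++
            (replicate (m-j) a ++ replicate j a)) := by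
        rw [rep_cat a (m-j) j m (by omega)]
        simp [List.append_assoc]
      rw [hs1, hs2,
        hdist_append _ _ _ _ (by simp),
        hdist_append _ _ _ _ (by simp),
        hdist_append _ _ _ _ (by simp)]
      simp [hdist_rep, hab, Ne.symm hab]
      omega
    · -- k = 2j+1 odd, 1 ≤ j < m : y = a^{n-m-1} b a^{m-j} c^j
      have hj1 : 1 ≤ j := by omega
      have hjm : j ≤ m := by omega
      refine ⟨replicate m a,
        replicate (n-m-1) a ++ (replicate 1 b ++ (replicate (m-j) a ++ replicate j c)),
        by simp, by simp; omega, ?_, a, rfl⟩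
      have hs1 : replicate m a ++ (replicate (n-m-1) a ++ (replicate 1 b ++
            (replicate (m-j) a ++ replicate j c)))
          = replicate (n-m-1) a ++ (replicate 1 a ++ (replicate (m-j) a ++
            (replicate (j-1) a ++ (replicate 1 b ++
              (replicate (m-j) a ++ replicate j c))))) := by
        rw [rep_glue a m (n-m-1) (n-1) (by omega),
          rep_glue a (m-j) (j-1) (m-1) (by omega),
          rep_glue a 1 (m-1) m (by omega),
          rep_glue a (n-m-1) m (n-1) (by omega)]
      have hs2 : (replicate (n-m-1) a ++ (replicate 1 b ++
            (replicate (m-j) a ++ replicate j c))) ++ replicate m a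
          = replicate (n-m-1) a ++ (replicate 1 b ++ (replicate (m-j) a ++
            (replicate (j-1) c ++ (replicate 1 c ++
              (replicate (m-j) a ++ replicate j a))))) := by
        rw [rep_cat a (m-j) j m (by omega), rep_glue c (j-1) 1 j (by omega)]
        simp [List.append_assoc]
      rw [hs1, hs2,
        hdist_append _ _ _ _ (by simp),
        hdist_append _ _ _ _ (by simp),
        hdist_append _ _ _ _ (by simp),
        hdist_append _ _ _ _ (by simp),
        hdist_append _ _ _ _ (by simp),
        hdist_append _ _ _ _ (by simp)]
      simp [hdist_rep, hdist_single, hab, hac, hbc, Ne.symm hab, Ne.symm hac, Ne.symm hbc]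
      omega
end

section
/- Let Σ be an alphabet with at least 3 letters and let m, k be integers with 1 ≤ m and 0 ≤ k ≤ 2m. Then there exist strings x, y over Σ with |x| = |y| = m and h(xy, yx) = k if and only if k is even. -/
lemma hdist_append_s10 {α : Type*} [DecidableEq α] (x y u v : List α)
    (h : x.length = y.length) :
    hdist (x ++ u) (y ++ v) = hdist x y + hdist u v := by
  unfold hdist
  rw [List.zip_append h, List.filter_append, List.length_append]

lemma hdist_comm {α : Type*} [DecidableEq α] (x y : List α) :
    hdist x y = hdist y x := by
  unfold hdist
  rw [← List.zip_swap y x, List.filter_map, List.length_map]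
  congr 1
  apply List.filter_congr
  intro p _
  simp [eq_comm]

lemma hdist_replicate {α : Type*} [DecidableEq α] (a b : α) (n : ℕ) (hab : a ≠ b) :
    hdist (List.replicate n a) (List.replicate n b) = n := by
  unfold hdist
  simp [List.zip_replicate', List.filter_replicate, hab]

lemma hdist_self {α : Type*} [DecidableEq α] (x : List α) : hdist x x = 0 := by
  unfold hdist
  induction x with
  | nil => rfl
  | cons a l ih => simpa [hdist, List.zip_cons_cons] using ih

theorem hamming_realizable_eq {α : Type*} [DecidableEq α]
    (hcard : ∃ a b c : α, a ≠ b ∧ a ≠ c ∧ b ≠ c)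
    (m k : ℕ) (hm : 1 ≤ m) (hk : k ≤ 2 * m) :
    (∃ x y : List α, x.length = m ∧ y.length = m ∧ hdist (x ++ y) (y ++ x) = k) ↔
      Even k := by
  constructor
  · rintro ⟨x, y, hx, hy, hxy⟩
    rw [hdist_append_s10 x y y x (hx.trans hy.symm), hdist_comm y x] at hxy
    exact ⟨hdist x y, by omega⟩
  · rintro ⟨j, hj⟩
    obtain ⟨a, b, c, hab, hac, hbc⟩ := hcard
    have hjm : j ≤ m := by omega
    refine ⟨List.replicate m a, List.replicate j b ++ List.replicate (m - j) a, by simp, by simp; omega, ?_⟩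
    have h1 : List.replicate m a = List.replicate j a ++ List.replicate (m - j) a := by
      rw [← List.replicate_add]; congr 1; omega
    rw [hdist_append_s10 _ _ _ _ (by simp only [List.length_append, List.length_replicate]; omega), hdist_comm]
    rw [h1, hdist_append_s10 _ _ _ _ (by simp), hdist_replicate _ _ _ hab.symm, hdist_self]
    omega
end

section
/- For strings x, y over a two-letter alphabet, h(xy, yx) is even. -/
/-- In each position, the contribution to the Hamming distance plus the sum
of the two digit values is even. -/
lemma hdist_add_sum_even : ∀ (u v : List (Fin 2)),
    Even (hdist u v + ((u.zip v).map (fun p => p.1.val + p.2.val)).sum)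
  | [], _ => by simp [hdist]
  | _ :: _, [] => by simp [hdist]
  | a :: u, b :: v => by
    have ih := hdist_add_sum_even u v
    rw [Nat.even_iff] at ih ⊢
    simp only [hdist, List.zip_cons_cons, List.filter_cons, List.map_cons,
      List.sum_cons] at ih ⊢
    by_cases hab : a = b
    · rw [if_neg (by simp [hab])]
      have h2 : a.val + b.val = 0 ∨ a.val + b.val = 2 := by
        subst hab; omega
      omega
    · rw [if_pos (by simp [hab])]
      have h1 : a.val + b.val = 1 := by omega
      simp only [List.length_cons]
      omega

lemma zip_sum_eq : ∀ (u v : List (Fin 2)), u.length = v.length →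
    ((u.zip v).map (fun p => p.1.val + p.2.val)).sum
      = (u.map Fin.val).sum + (v.map Fin.val).sum
  | [], [], _ => by simp
  | a :: u, b :: v, h => by
    have ih := zip_sum_eq u v (by simpa using h)
    simp [List.sum_cons, ih]; omega

theorem hamming_conj_even_binary (x y : List (Fin 2)) :
    Even (hdist (x ++ y) (y ++ x)) := by
  have hlen : (x ++ y).length = (y ++ x).length := by simp [Nat.add_comm]
  have h1 := hdist_add_sum_even (x ++ y) (y ++ x)
  rw [zip_sum_eq _ _ hlen] at h1
  have h2 : Even (((x ++ y).map Fin.val).sum + ((y ++ x).map Fin.val).sum) := by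
    simp only [List.map_append, List.sum_append]
    exact ⟨(x.map Fin.val).sum + (y.map Fin.val).sum, by ring⟩
  rcases h1 with ⟨k, hk⟩
  rcases h2 with ⟨m, hm⟩
  exact ⟨k - m, by omega⟩
end

section
/- Let x, y be binary strings with |x| = m, |y| = n, m, n ≥ 1. If (m+n)/gcd(m,n) is odd, then h(xy, yx) ≤ m + n − gcd(m,n). -/
lemma countP_eq_card_filter_univ {α : Type*} (l : List α) (p : α → Bool) {N : ℕ}
    (h : l.length = N) :
    l.countP p = (Finset.univ.filter (fun i : Fin N => p (l.get (Fin.cast h.symm i)))).card := by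
  subst h
  conv_lhs => rw [← List.map_get_finRange l]
  rw [List.countP_map, Fin.univ_def, Finset.card_def, Finset.filter_val,
    ← Multiset.countP_eq_card_filter, Multiset.coe_countP]
  exact List.countP_congr (fun i _ => by simp [Fin.cast])

lemma hdist_eq_card {α : Type*} [DecidableEq α] {N : ℕ} (u v : List α)
    (hu : u.length = N) (hv : v.length = N) :
    hdist u v = (Finset.univ.filter (fun i : Fin N =>
      u.get (Fin.cast hu.symm i) ≠ v.get (Fin.cast hv.symm i))).card := by
  have hzip : (u.zip v).length = N := by rw [List.length_zip, hu, hv, Nat.min_self]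
  rw [hdist, ← List.countP_eq_length_filter,
    countP_eq_card_filter_univ (u.zip v) _ hzip]
  congr 1
  apply Finset.filter_congr
  intro i _
  simp [List.get_eq_getElem, List.getElem_zip]

theorem hamming_upper_bound_odd_cycles (x y : List (Fin 2)) (m n : ℕ)
    (hx : x.length = m) (hy : y.length = n) (hm : 1 ≤ m) (hn : 1 ≤ n)
    (hodd : Odd ((m + n) / Nat.gcd m n)) :
    hdist (x ++ y) (y ++ x) ≤ m + n - Nat.gcd m n := by
  set g := Nat.gcd m n with hgdef
  set N := m + n with hNdef
  set L := N / g with hLdef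
  have hg : 0 < g := Nat.gcd_pos_of_pos_left n hm
  have hgm : g ∣ m := Nat.gcd_dvd_left m n
  have hgn : g ∣ n := Nat.gcd_dvd_right m n
  have hgN : g ∣ N := Dvd.dvd.add hgm hgn
  have hNL : g * L = N := Nat.mul_div_cancel' hgN
  have hNpos : 0 < N := by omega
  have hmN : m < N := by omega
  have hz : (x ++ y).length = N := by simp [hx, hy]; omega
  have hw : (y ++ x).length = N := by simp [hx, hy]; omega
  set f : Fin N → Fin 2 := fun i => (x ++ y).get (Fin.cast hz.symm i) with hfdef
  set c : Fin N := ⟨m, hmN⟩ with hcdef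
  have hrot : y ++ x = (x ++ y).rotate m := by
    rw [List.rotate_eq_drop_append_take (by rw [hz]; omega),
      List.drop_left' hx, List.take_left' hx]
  have key : ∀ i : Fin N, (y ++ x).get (Fin.cast hw.symm i) = f (i + c) := by
    intro i
    have hidx : ((i : ℕ) + m) % (x ++ y).length = ((i + c : Fin N) : ℕ) := by
      simp [Fin.val_add, hz, hcdef]
    simp only [hrot, List.get_eq_getElem, Fin.coe_cast, List.getElem_rotate, hfdef, hidx]
  rw [hdist_eq_card (x ++ y) (y ++ x) hz hw]
  have hfilter : (Finset.univ.filter (fun i : Fin N =>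
      (x ++ y).get (Fin.cast hz.symm i) ≠ (y ++ x).get (Fin.cast hw.symm i))) =
      (Finset.univ.filter (fun i : Fin N => f i ≠ f (i + c))) := by
    apply Finset.filter_congr
    intro i _
    rw [key i]
  rw [hfilter]
  set S := Finset.univ.filter (fun i : Fin N => f i ≠ f (i + c)) with hSdef
  have hfib : S.card = ∑ r ∈ Finset.range g, (S.filter (fun i : Fin N => (i : ℕ) % g = r)).card :=
    Finset.card_eq_sum_card_fiberwise (fun i _ => Finset.mem_range.mpr (Nat.mod_lt _ hg))
  have hbound : ∀ r ∈ Finset.range g,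
      (S.filter (fun i : Fin N => (i : ℕ) % g = r)).card ≤ L - 1 := by
    intro r hr
    set F := Finset.univ.filter (fun i : Fin N => (i : ℕ) % g = r) with hFdef
    have hTF : S.filter (fun i : Fin N => (i : ℕ) % g = r) = F.filter (fun i => f i ≠ f (i + c)) := by
      rw [hSdef, hFdef, Finset.filter_filter, Finset.filter_filter]
      apply Finset.filter_congr
      intro i _
      constructor <;> (intro h; exact ⟨h.2, h.1⟩)
    rw [hTF]
    set T := F.filter (fun i => f i ≠ f (i + c)) with hTdef
    -- card F ≤ L
    have hFL : F.card ≤ L := by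
      have hlt : ∀ i : Fin N, (i : ℕ) / g < L := by
        intro i
        have : (i : ℕ) < L * g := by rw [mul_comm, hNL]; exact i.isLt
        exact Nat.div_lt_of_lt_mul (by rwa [mul_comm] at this)
      have hinj : Set.InjOn (fun i : Fin N => (⟨(i : ℕ) / g, hlt i⟩ : Fin L)) ↑F := by
        intro a ha b hb hab
        simp only [hFdef, Finset.coe_filter, Set.mem_setOf_eq, Finset.mem_univ, true_and] at ha hb
        have h1 : (a : ℕ) / g = (b : ℕ) / g := congrArg Fin.val hab
        have h2 : g * ((a : ℕ) / g) + (a : ℕ) % g = (a : ℕ) := Nat.div_add_mod _ _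
        have h3 : g * ((b : ℕ) / g) + (b : ℕ) % g = (b : ℕ) := Nat.div_add_mod _ _
        apply Fin.ext
        rw [← h2, ← h3, h1, ha, hb]
      have := Finset.card_le_card_of_injOn (s := F) (t := (Finset.univ : Finset (Fin L)))
        (fun i : Fin N => (⟨(i : ℕ) / g, hlt i⟩ : Fin L)) (fun a _ => Finset.mem_univ _) hinj
      simpa using this
    have hmem : ∀ i : Fin N, i ∈ F → i + c ∈ F := by
      intro i hi
      simp only [hFdef, Finset.mem_filter, Finset.mem_univ, true_and] at hi ⊢
      have h1 : ((i + c : Fin N) : ℕ) = ((i : ℕ) + m) % N := by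
        simp [Fin.val_add, hcdef]
      obtain ⟨k, hk⟩ := hgm
      rw [h1, Nat.mod_mod_of_dvd _ hgN, hk, Nat.add_mul_mod_self_left]
      exact hi
    have hInj : Function.Injective (fun i : Fin N => i + c) := add_left_injective c
    have hpar : 2 ∣ T.card := by
      have h1 : ∀ a b : Fin 2, (if a ≠ b then (1 : ZMod 2) else 0)
          = ((a.val : ZMod 2) + (b.val : ZMod 2)) := by decide
      have hcast : (T.card : ZMod 2) = 0 := by
        rw [hTdef, Finset.card_filter]
        push_cast
        rw [Finset.sum_congr rfl (fun i _ => h1 (f i) (f (i + c)))]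
        rw [Finset.sum_add_distrib]
        have himg : ∑ i ∈ F, (((f (i + c)).val : ZMod 2)) = ∑ i ∈ F, ((f i).val : ZMod 2) := by
          rw [← Finset.sum_image (f := fun j : Fin N => (((f j) : ℕ) : ZMod 2))
            (g := fun i : Fin N => i + c) (fun a _ b _ h => hInj h)]
          congr 1
          apply Finset.eq_of_subset_of_card_le
          · intro j hj
            obtain ⟨i, hi, rfl⟩ := Finset.mem_image.mp hj
            exact hmem i hi
          · rw [Finset.card_image_of_injective _ hInj]
        rw [himg, ← two_mul]
        have h2 : (2 : ZMod 2) = 0 := rfl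
        rw [h2, zero_mul]
      exact (ZMod.natCast_eq_zero_iff _ 2).mp hcast
    have hTle : T.card ≤ L :=
      le_trans (Finset.card_le_card (Finset.filter_subset _ _)) hFL
    obtain ⟨k, hk⟩ := hodd
    obtain ⟨j, hj⟩ := hpar
    omega
  calc S.card = ∑ r ∈ Finset.range g, (S.filter (fun i : Fin N => (i : ℕ) % g = r)).card := hfib
    _ ≤ ∑ _r ∈ Finset.range g, (L - 1) := Finset.sum_le_sum hbound
    _ = g * (L - 1) := by rw [Finset.sum_const, Finset.card_range, smul_eq_mul]
    _ ≤ N - g := by rw [Nat.mul_sub]; omega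
end

section
/- Let m, n, k be integers with 1 ≤ m ≤ n, 0 ≤ k ≤ m+n, k even, and additionally k ≤ m+n−gcd(m,n) whenever (m+n)/gcd(m,n) is odd. Then there exist binary strings x, y with |x| = m, |y| = n, and h(xy,yx) = k. -/
lemma hdist_ofFn {α : Type*} [DecidableEq α] : ∀ {N : ℕ} (f g : Fin N → α),
    (((List.ofFn f).zip (List.ofFn g)).filter (fun p => decide (p.1 ≠ p.2))).length
      = ∑ i, if f i ≠ g i then 1 else 0 := by
  intro N
  induction N with
  | zero => intro f g; simp
  | succ N ih =>
    intro f g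
    rw [List.ofFn_succ, List.ofFn_succ, List.zip_cons_cons, Fin.sum_univ_succ,
      List.filter_cons]
    have := ih (fun i => f i.succ) (fun i => g i.succ)
    by_cases h : f 0 = g 0 <;>
      simp only [h, ne_eq, decide_not] at this ⊢ <;>
      simp [h, this] <;> omega

lemma sum_min (T K : ℕ) : ∀ d, ∑ r ∈ Finset.range d, min T (K - r*T) = min K (d*T) := by
  intro d
  induction d with
  | zero => simp
  | succ d ih => rw [Finset.sum_range_succ, ih, Nat.succ_mul]; omega

def pat (j s : ℕ) : Fin 2 := if s < 2*j ∧ s % 2 = 1 then 1 else 0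

lemma pat_ne_iff (j a b : ℕ) :
    pat j a ≠ pat j b ↔ ¬((a < 2*j ∧ a % 2 = 1) ↔ (b < 2*j ∧ b % 2 = 1)) := by
  unfold pat; split_ifs with h1 h2 h2 <;> simp [h1, h2]

lemma cycle_count (t j : ℕ) (ht : 1 ≤ t) (hj : 2*j ≤ t) :
    (∑ s : Fin t, if pat j s ≠ pat j ((s+1) % t) then 1 else 0) = 2*j := by
  have key : ∀ s : Fin t, (if pat j s ≠ pat j ((s+1) % t) then 1 else 0)
      = if (s:ℕ) < 2*j then 1 else 0 := by
    intro s
    refine if_congr ?_ rfl rfl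
    rw [pat_ne_iff]
    rcases lt_or_eq_of_le (Nat.succ_le_of_lt s.isLt) with h | h
    · rw [Nat.mod_eq_of_lt h]; omega
    · have h0 : ((s:ℕ)+1) % t = 0 := by
        rw [show (s:ℕ)+1 = t from h, Nat.mod_self]
      rw [h0]
      have hs : (s:ℕ) = t - 1 := by omega
      omega
  simp_rw [key]
  rw [Fin.sum_univ_eq_sum_range (fun i => if i < 2*j then 1 else 0) t,
    ← Finset.card_filter]
  have : (Finset.range t).filter (· < 2*j) = Finset.range (2*j) := by
    ext i; simp; omega
  rw [this, Finset.card_range]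

theorem binary_realizable (m n k : ℕ) (hm : 1 ≤ m) (hmn : m ≤ n)
    (hk : k ≤ m + n) (hke : Even k)
    (hkc : Odd ((m + n) / Nat.gcd m n) → k ≤ m + n - Nat.gcd m n) :
    ∃ x y : List (Fin 2), x.length = m ∧ y.length = n ∧
      hdist (x ++ y) (y ++ x) = k := by
  set N := m + n with hNdef
  set d := Nat.gcd m n with hddef
  set t := N / d with htdef
  have hd : 0 < d := Nat.gcd_pos_of_pos_left n hm
  have hdm : d ∣ m := Nat.gcd_dvd_left m n
  have hdn : d ∣ n := Nat.gcd_dvd_right m n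
  have hdN : d ∣ N := Dvd.dvd.add hdm hdn
  have hN : N = d * t := (Nat.mul_div_cancel' hdN).symm
  have hN0 : 0 < N := by omega
  have ht1 : 1 ≤ t := by
    rcases Nat.eq_zero_or_pos t with h | h
    · rw [h, Nat.mul_zero] at hN; omega
    · exact h
  -- d = gcd m N and coprimality
  have hgmN : Nat.gcd m N = d := by
    rw [hNdef, Nat.add_comm, Nat.gcd_add_self_right]
  obtain ⟨m₁, hm1⟩ := hdm
  have hcop : Nat.Coprime m₁ t := by
    have := Nat.coprime_div_gcd_div_gcd (m := m) (n := N) (by rw [hgmN]; exact hd)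
    have h1 : m / d = m₁ := by rw [hm1]; exact Nat.mul_div_cancel_left _ hd
    rwa [hgmN, h1, ← htdef] at this
  set T := t / 2 with hTdef
  set K := k / 2 with hKdef
  have hkK : k = 2 * K := by
    obtain ⟨j, hj⟩ := hke; omega
  have hKT : K ≤ d * T := by
    rcases Nat.even_or_odd t with he | ho
    · have h2T : t = 2 * T := by obtain ⟨j, hj⟩ := he; omega
      have : d * t = 2 * (d * T) := by rw [h2T]; ring
      omega
    · have hkc' := hkc ho
      have h2T : t = 2 * T + 1 := by obtain ⟨j, hj⟩ := ho; omega
      have : d * t = 2 * (d * T) + d := by rw [h2T]; ring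
      omega
  set c : ℕ → ℕ := fun r => min T (K - r * T) with hcdef
  have hsum : ∑ r ∈ Finset.range d, c r = K := by
    rw [hcdef]; rw [sum_min T K d]; exact min_eq_left hKT
  have hcr : ∀ r, 2 * c r ≤ t := by
    intro r
    have : c r ≤ T := min_le_left _ _
    omega
  -- the bijection
  set emap : Fin d × Fin t → Fin N :=
    fun p => ⟨(p.1 + p.2 * m) % N, Nat.mod_lt _ hN0⟩ with hemap
  have hinj : Function.Injective emap := by
    rintro ⟨r, s⟩ ⟨r', s'⟩ h
    have hmod : ((r : ℕ) + s * m) % N = ((r' : ℕ) + s' * m) % N := by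
      simpa [hemap, Fin.ext_iff] using h
    have hME : (r : ℕ) + s * m ≡ (r' : ℕ) + s' * m [MOD N] := hmod
    have hrr : (r : ℕ) = r' := by
      have h1 : (r : ℕ) + s * m ≡ (r' : ℕ) + s' * m [MOD d] := hME.of_dvd hdN
      have e1 : ((r : ℕ) + s * m) % d = (r : ℕ) := by
        rw [hm1, show (r : ℕ) + s * (d * m₁) = (r : ℕ) + (s * m₁) * d by ring,
          Nat.add_mul_mod_self_right, Nat.mod_eq_of_lt r.isLt]
      have e2 : ((r' : ℕ) + s' * m) % d = (r' : ℕ) := by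
        rw [hm1, show (r' : ℕ) + s' * (d * m₁) = (r' : ℕ) + (s' * m₁) * d by ring,
          Nat.add_mul_mod_self_right, Nat.mod_eq_of_lt r'.isLt]
      rw [Nat.ModEq] at h1; rw [e1, e2] at h1; exact h1
    have hss : (s : ℕ) = s' := by
      have h2 : (s : ℕ) * m ≡ (s' : ℕ) * m [MOD N] := by
        refine Nat.ModEq.add_left_cancel' (r : ℕ) ?_
        rw [hrr] at hME ⊢; exact hME
      have h3 : d * ((s : ℕ) * m₁) ≡ d * ((s' : ℕ) * m₁) [MOD d * t] := by
        rw [show d * ((s : ℕ) * m₁) = (s : ℕ) * (d * m₁) by ring,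
          show d * ((s' : ℕ) * m₁) = (s' : ℕ) * (d * m₁) by ring, ← hm1, ← hN]
        exact h2
      have h4 : (s : ℕ) * m₁ ≡ (s' : ℕ) * m₁ [MOD t] := by
        rw [Nat.ModEq, Nat.mul_mod_mul_left, Nat.mul_mod_mul_left] at h3
        exact Nat.eq_of_mul_eq_mul_left hd h3
      have h5 : (s : ℕ) ≡ (s' : ℕ) [MOD t] :=
        Nat.ModEq.cancel_right_of_coprime (by rw [Nat.gcd_comm]; exact hcop) h4
      rw [Nat.ModEq, Nat.mod_eq_of_lt s.isLt, Nat.mod_eq_of_lt s'.isLt] at h5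
      exact h5
    exact Prod.ext (Fin.ext hrr) (Fin.ext hss)
  have hbij : Function.Bijective emap := by
    rw [Fintype.bijective_iff_injective_and_card]
    refine ⟨hinj, ?_⟩
    simp [hN]
  set e : (Fin d × Fin t) ≃ Fin N := Equiv.ofBijective emap hbij with hedef
  set w : Fin N → Fin 2 :=
    fun i => pat (c (e.symm i).1) ((e.symm i).2) with hwdef
  set shift : Fin N → Fin N := fun i => ⟨((i : ℕ) + m) % N, Nat.mod_lt _ hN0⟩
    with hshift
  -- the key shift identity
  have hshift_e : ∀ p : Fin d × Fin t,
      shift (e p) = e (p.1, ⟨((p.2 : ℕ) + 1) % t, Nat.mod_lt _ ht1⟩) := by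
    rintro ⟨r, s⟩
    have he : ∀ q, e q = emap q := fun q => rfl
    rw [he, he]
    apply Fin.ext
    show (((r : ℕ) + s * m) % N + m) % N = ((r : ℕ) + (((s : ℕ) + 1) % t) * m) % N
    rw [Nat.mod_add_mod]
    set q := ((s : ℕ) + 1) / t with hq
    have hsq : (s : ℕ) + 1 = ((s : ℕ) + 1) % t + t * q := (Nat.mod_add_div _ _).symm
    have expand : (r : ℕ) + s * m + m = (r : ℕ) + (((s : ℕ) + 1) % t) * m + N * (m₁ * q) := by
      have : (r : ℕ) + s * m + m = (r : ℕ) + ((s : ℕ) + 1) * m := by ring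
      rw [this, hN, hm1]
      rw [show ((s : ℕ) + 1) * (d * m₁) = (((s:ℕ)+1) % t + t * q) * (d * m₁) by rw [← hsq]]
      ring
    rw [expand, Nat.add_mul_mod_self_left]
  -- count mismatches
  have hcount : (∑ i : Fin N, if w i ≠ w (shift i) then 1 else 0) = k := by
    rw [← Equiv.sum_comp e (fun i => if w i ≠ w (shift i) then (1:ℕ) else 0)]
    have term : ∀ p : Fin d × Fin t,
        (if w (e p) ≠ w (shift (e p)) then (1:ℕ) else 0)
          = if pat (c p.1) p.2 ≠ pat (c p.1) (((p.2 : ℕ) + 1) % t) then 1 else 0 := by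
      rintro ⟨r, s⟩
      rw [hshift_e]
      rw [hwdef]
      simp only [Equiv.symm_apply_apply]
    simp_rw [term]
    rw [Fintype.sum_prod_type]
    have inner : ∀ r : Fin d,
        (∑ s : Fin t, if pat (c r) s ≠ pat (c r) (((s : ℕ) + 1) % t) then (1:ℕ) else 0)
          = 2 * c r := fun r => cycle_count t (c r) ht1 (hcr r)
    simp_rw [inner]
    rw [← Finset.mul_sum, Fin.sum_univ_eq_sum_range (fun r => c r) d, hsum]
    omega
  -- build the lists
  set L : List (Fin 2) := List.ofFn w with hL
  have hLlen : L.length = N := by simp [hL]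
  have hmN : m ≤ N := by omega
  refine ⟨L.take m, L.drop m, ?_, ?_, ?_⟩
  · simp [hLlen]; omega
  · simp [hLlen]; omega
  · rw [List.take_append_drop]
    have hrot : L.drop m ++ L.take m = L.rotate m :=
      (List.rotate_eq_drop_append_take (by rw [hLlen]; exact hmN)).symm
    rw [hrot]
    have hrot2 : L.rotate m = List.ofFn (fun i : Fin N => w (shift i)) := by
      apply List.ext_get
      · simp [hLlen]
      · intro i h1 h2
        rw [List.get_rotate]
        simp only [hL, List.get_eq_getElem, List.getElem_ofFn, hshift, hLlen, List.length_ofFn]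
    rw [hrot2]
    show (((List.ofFn w).zip (List.ofFn fun i => w (shift i))).filter
      (fun p => decide (p.1 ≠ p.2))).length = k
    rw [hdist_ofFn w (fun i => w (shift i))]
    exact hcount
end
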